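/- Taylor expansion of the simplified memory: if PL and QL commute, then ∫₀ᵗ e^{(t−s)L} P L e^{sQL} Q L x ds = ∑_{j=1}^{∞} (−1)^{j+1} (tʲ/j!) e^{tL} (PL)ʲ Q L x, with the series converging absolutely for all t. -/

import Mathlib

open NormedSpace
set_option maxHeartbeats 1000000
set_option synthInstance.maxHeartbeats 500000

/-- Taylor expansion of the simplified memory: if `PL` and `QL` commute, then
`∫₀ᵗ e^{(t−s)L} P L e^{sQL} Q L x ds = ∑_{j=1}^∞ (−1)^{j+1} (tʲ/j!) e^{tL} (PL)ʲ Q L x`,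
with the series converging (unconditionally/absolutely) for all `t`.  Here `Q = I − P` and
the sum is indexed by `n = j − 1`. -/
theorem memory_taylor_expansion
    (X : Type*) [NormedAddCommGroup X] [NormedSpace ℝ X] [CompleteSpace X]
    (L P : X →L[ℝ] X) (hP : P ∘L P = P)
    (hcomm : (P * L) * ((1 - P) * L) = ((1 - P) * L) * (P * L)) (x : X) (t : ℝ) :
    HasSum
      (fun n : ℕ =>
        ((-1 : ℝ) ^ n * t ^ (n + 1) / (Nat.factorial (n + 1) : ℝ)) •
          exp (t • L) (((P * L) ^ (n + 1)) ((1 - P) (L x))))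
      (∫ s in (0 : ℝ)..t,
        exp ((t - s) • L) (P (L (exp (s • ((1 - P) * L)) ((1 - P) (L x)))))) ∧
    Summable
      (fun n : ℕ =>
        ‖((-1 : ℝ) ^ n * t ^ (n + 1) / (Nat.factorial (n + 1) : ℝ)) •
            exp (t • L) (((P * L) ^ (n + 1)) ((1 - P) (L x)))‖) := by
  let +nondep : NormedAlgebra ℚ (X →L[ℝ] X) := .restrictScalars ℚ ℝ (X →L[ℝ] X)
  set A : X →L[ℝ] X := P * L with hA
  set B : X →L[ℝ] X := (1 - P) * L with hB
  set c : X := (1 - P) (L x) with hc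
  have hL : A + B = L := by rw [hA, hB, ← add_mul, add_sub_cancel, one_mul]
  have hAB : Commute A B := hcomm
  have hAL : Commute A L := hL ▸ (Commute.refl A).add_right hAB
  have hBL : Commute B L := hL ▸ hAB.symm.add_right (Commute.refl B)
  -- the continuous linear functional T ↦ exp(tL) (T c)
  set Φ : (X →L[ℝ] X) →L[ℝ] X :=
    (exp (t • L)).comp (ContinuousLinearMap.apply ℝ X c) with hΦ
  have hΦ_apply : ∀ T : X →L[ℝ] X, Φ T = exp (t • L) (T c) := fun T => rfl
  -- key algebra identity
  have key : ∀ s : ℝ, exp ((t - s) • L) * (A * exp (s • B))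
      = exp (t • L) * exp (s • (-A)) * A := by
    intro s
    have cA1 : Commute A (exp ((t - s) • L)) := (hAL.smul_right (t - s)).exp_right
    have cA2 : Commute A (exp (t • L)) := (hAL.smul_right t).exp_right
    have cA3 : Commute A (exp (s • (-A))) :=
      (((Commute.refl A).neg_right).smul_right s).exp_right
    have c1 : Commute ((t - s) • L) (s • B) := ((hBL.symm.smul_right s).smul_left (t - s))
    have c2 : Commute (t • L) (s • (-A)) := ((hAL.symm.neg_right.smul_right s).smul_left t)
    have harg : (t - s) • L + s • B = t • L + s • (-A) := by rw [← hL]; module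
    have e1 : exp ((t - s) • L) * exp (s • B) = exp (t • L) * exp (s • (-A)) := by
      rw [← exp_add_of_commute c1, harg, exp_add_of_commute c2]
    calc exp ((t - s) • L) * (A * exp (s • B))
        = A * exp ((t - s) • L) * exp (s • B) := by rw [← mul_assoc, ← cA1.eq]
      _ = A * (exp (t • L) * exp (s • (-A))) := by rw [mul_assoc, e1]
      _ = exp (t • L) * exp (s • (-A)) * A := (cA2.mul_right cA3).eq
  -- the integrand equals Φ (exp (s • (-A)) * A)
  have hpt : ∀ s : ℝ,
      exp ((t - s) • L) (P (L (exp (s • B) c))) = Φ (exp (s • (-A)) * A) := by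
    intro s
    have h1 : P (L (exp (s • B) c)) = (A * exp (s • B)) c := rfl
    rw [h1, ← ContinuousLinearMap.mul_apply, key s, hΦ_apply]
    simp [ContinuousLinearMap.mul_apply]
  -- compute the integral via FTC
  have hderiv : ∀ s : ℝ, HasDerivAt (fun u : ℝ => -(Φ (exp (u • (-A)))))
      (Φ (exp (s • (-A)) * A)) s := by
    intro s
    have h1 : HasDerivAt (fun u : ℝ => exp (u • (-A))) (exp (s • (-A)) * (-A)) s :=
      hasDerivAt_exp_smul_const (-A) s
    have h2 := (Φ.hasFDerivAt.comp_hasDerivAt s h1).neg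
    have : -(Φ (exp (s • (-A)) * (-A))) = Φ (exp (s • (-A)) * A) := by
      rw [mul_neg, map_neg, neg_neg]
    rwa [this] at h2
  have hg_cont : Continuous fun s : ℝ => Φ (exp (s • (-A)) * A) :=
    Φ.continuous.comp (((exp_continuous).comp
      (continuous_id.smul continuous_const)).mul continuous_const)
  have hInt : (∫ s in (0 : ℝ)..t, exp ((t - s) • L) (P (L (exp (s • B) c))))
      = exp (t • L) c - Φ (exp (t • (-A))) := by
    rw [intervalIntegral.integral_congr (g := fun s => Φ (exp (s • (-A)) * A))
      (fun s _ => hpt s)]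
    rw [intervalIntegral.integral_eq_sub_of_hasDerivAt (fun s _ => hderiv s)
      (hg_cont.intervalIntegrable 0 t)]
    have h0 : ((0 : ℝ) • (-A)) = 0 := zero_smul _ _
    rw [h0, exp_zero]
    simp only [hΦ_apply, ContinuousLinearMap.one_apply]
    abel
  -- the series
  have hsum0 : HasSum (fun n : ℕ => ((n.factorial : ℝ)⁻¹) • (t • (-A)) ^ n)
      (exp (t • (-A))) := exp_series_hasSum_exp' (t • (-A))
  have hsum1 : HasSum (fun n : ℕ => Φ (((n.factorial : ℝ)⁻¹) • (t • (-A)) ^ n))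
      (Φ (exp (t • (-A)))) := Φ.hasSum hsum0
  have hterm : ∀ n : ℕ,
      ((-1 : ℝ) ^ n * t ^ (n + 1) / (Nat.factorial (n + 1) : ℝ)) •
          exp (t • L) ((A ^ (n + 1)) c)
        = -(Φ ((((n + 1).factorial : ℝ)⁻¹) • (t • (-A)) ^ (n + 1))) := by
    intro n
    have h1 : (t • (-A)) ^ (n + 1) = ((-t) ^ (n + 1)) • A ^ (n + 1) := by
      rw [smul_neg, ← neg_smul, smul_pow]
    rw [h1, map_smul, map_smul, hΦ_apply, ← smul_assoc, ← neg_smul]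
    congr 1
    rw [neg_pow, pow_succ]
    simp only [smul_eq_mul]
    ring
  constructor
  · have hsum2 : HasSum (fun n : ℕ => Φ ((((n + 1).factorial : ℝ)⁻¹) • (t • (-A)) ^ (n + 1)))
        (Φ (exp (t • (-A))) - ∑ i ∈ Finset.range 1,
          Φ (((i.factorial : ℝ)⁻¹) • (t • (-A)) ^ i)) :=
      (hasSum_nat_add_iff' 1).mpr hsum1
    have h0 : (∑ i ∈ Finset.range 1, Φ (((i.factorial : ℝ)⁻¹) • (t • (-A)) ^ i))
        = exp (t • L) c := by
      simp [hΦ_apply]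
    rw [h0] at hsum2
    have := hsum2.neg
    rw [neg_sub] at this
    rw [hInt]
    convert this using 2 with n
    exact hterm n
  · have hr : Summable (fun n : ℕ => (‖exp (t • L)‖ * ‖c‖) *
        ((|t| * ‖A‖) ^ (n + 1) / ((n + 1).factorial : ℝ))) := by
      exact ((summable_nat_add_iff 1).mpr
        (Real.summable_pow_div_factorial (|t| * ‖A‖))).mul_left _
    refine Summable.of_nonneg_of_le (fun n => norm_nonneg _) (fun n => ?_) hr
    rw [norm_smul, Real.norm_eq_abs]
    have hco : |(-1 : ℝ) ^ n * t ^ (n + 1) / ((n + 1).factorial : ℝ)|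
        = |t| ^ (n + 1) / ((n + 1).factorial : ℝ) := by
      rw [abs_div, abs_mul, abs_pow, abs_pow, abs_neg, abs_one, one_pow, one_mul,
        Nat.abs_cast]
    rw [hco]
    have h1 : ‖exp (t • L) ((A ^ (n + 1)) c)‖
        ≤ ‖exp (t • L)‖ * (‖A‖ ^ (n + 1) * ‖c‖) := by
      calc ‖exp (t • L) ((A ^ (n + 1)) c)‖
          ≤ ‖exp (t • L)‖ * ‖(A ^ (n + 1)) c‖ := ContinuousLinearMap.le_opNorm _ _
        _ ≤ ‖exp (t • L)‖ * (‖A ^ (n + 1)‖ * ‖c‖) := by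
            gcongr; exact ContinuousLinearMap.le_opNorm _ _
        _ ≤ ‖exp (t • L)‖ * (‖A‖ ^ (n + 1) * ‖c‖) :=
            mul_le_mul_of_nonneg_left (mul_le_mul_of_nonneg_right
              (norm_pow_le' A n.succ_pos) (norm_nonneg c)) (norm_nonneg _)
    calc |t| ^ (n + 1) / ((n + 1).factorial : ℝ) * ‖exp (t • L) ((A ^ (n + 1)) c)‖
        ≤ |t| ^ (n + 1) / ((n + 1).factorial : ℝ)
          * (‖exp (t • L)‖ * (‖A‖ ^ (n + 1) * ‖c‖)) := by
          gcongr
      _ = (‖exp (t • L)‖ * ‖c‖) * ((|t| * ‖A‖) ^ (n + 1) / ((n + 1).factorial : ℝ)) := by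
          rw [mul_pow]; ring
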